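/- arXiv:1501.04251 — 2 statements merged into one kernel-verified Lean document; each statement's English description precedes it below -/
import Mathlib

section
/- Let F ∈ B_c, t > 0 and u(x,t) = ∫_ℝ F(x−ξ) Θ_t'(ξ) dξ. Then u(x,t) → 0 as |x| → ∞, and the improper integral of u(·,t) over ℝ recovers the integral of the initial data: lim_{α→−∞, β→+∞} ∫_α^β u(ξ,t) dξ = F(∞). -/
open MeasureTheory Filter Topology

/-- The Gauss–Weierstrass heat kernel `Θ_t(x) = (4πt)^(−1/2) exp(−x²/(4t))` for `t > 0`. -/
noncomputable def heatK (t x : ℝ) : ℝ :=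
  (Real.sqrt (4 * Real.pi * t))⁻¹ * Real.exp (-x ^ 2 / (4 * t))

/-- Spatial derivative of the heat kernel: `Θ_t'(ξ) = −ξ Θ_t(ξ)/(2t)`. -/
noncomputable def heatK' (t x : ℝ) : ℝ := -x * heatK t x / (2 * t)

/-- `F ∈ B_c`: continuous, vanishing at `−∞`, with a finite limit at `+∞`. -/
def memBc (F : ℝ → ℝ) : Prop :=
  Continuous F ∧ Tendsto F atBot (nhds (0 : ℝ)) ∧ ∃ L : ℝ, Tendsto F atTop (nhds L)

/-- Heat convolution `u(x,t) = ∫ F(x−ξ) Θ_t'(ξ) dξ` of the distribution `f = F'`. -/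
noncomputable def heatConv (F : ℝ → ℝ) (t x : ℝ) : ℝ := ∫ ξ : ℝ, F (x - ξ) * heatK' t ξ

lemma heatK_cont (t : ℝ) : Continuous (heatK t) := by
  unfold heatK; fun_prop

lemma heatK'_cont (t : ℝ) : Continuous (heatK' t) := by
  unfold heatK'; exact (((continuous_neg.mul (heatK_cont t))).div_const _)

lemma exp_arg_eq (t x : ℝ) : Real.exp (-x ^ 2 / (4 * t)) = Real.exp (-(4 * t)⁻¹ * x ^ 2) := by
  congr 1; ring

lemma integrable_heatK {t : ℝ} (ht : 0 < t) : Integrable (heatK t) := by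
  have hb : (0 : ℝ) < (4 * t)⁻¹ := by positivity
  have h := (integrable_exp_neg_mul_sq hb).const_mul (Real.sqrt (4 * Real.pi * t))⁻¹
  exact h.congr (Eventually.of_forall fun x => by rw [heatK, exp_arg_eq])

lemma integrable_heatK' {t : ℝ} (ht : 0 < t) : Integrable (heatK' t) := by
  have hb : (0 : ℝ) < (4 * t)⁻¹ := by positivity
  have h := (integrable_mul_exp_neg_mul_sq hb).const_mul
    (-(2 * t)⁻¹ * (Real.sqrt (4 * Real.pi * t))⁻¹)
  refine h.congr (Eventually.of_forall fun x => ?_)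
  rw [heatK', heatK, exp_arg_eq]
  ring

lemma integral_heatK {t : ℝ} (ht : 0 < t) : ∫ x : ℝ, heatK t x = 1 := by
  have hb : (0 : ℝ) < (4 * t)⁻¹ := by positivity
  have h : ∫ x : ℝ, heatK t x
      = (Real.sqrt (4 * Real.pi * t))⁻¹ * ∫ x : ℝ, Real.exp (-(4 * t)⁻¹ * x ^ 2) := by
    rw [← integral_const_mul]
    exact integral_congr_ae (Eventually.of_forall fun x => by rw [heatK, exp_arg_eq])
  rw [h, integral_gaussian, show Real.pi / (4 * t)⁻¹ = 4 * Real.pi * t by field_simp]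
  exact inv_mul_cancel₀ (ne_of_gt (Real.sqrt_pos.mpr (by positivity)))

lemma integral_heatK' {t : ℝ} (ht : 0 < t) : ∫ x : ℝ, heatK' t x = 0 := by
  have hodd : ∀ x : ℝ, heatK' t (-x) = -heatK' t x := by
    intro x; rw [heatK', heatK', heatK, heatK, neg_pow]; ring_nf
  have h : ∫ x : ℝ, heatK' t x = ∫ x : ℝ, heatK' t (-x) :=
    (integral_neg_eq_self (heatK' t) volume).symm
  rw [h] at *
  have h2 : ∫ x : ℝ, heatK' t (-x) = -∫ x : ℝ, heatK' t x := by
    simp_rw [hodd]; exact integral_neg _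
  nth_rewrite 1 [integral_neg_eq_self (heatK' t) volume] at h2 ⊢
  linarith

lemma hasDerivAt_heatK {t : ℝ} (ht : 0 < t) (x : ℝ) :
    HasDerivAt (heatK t) (heatK' t x) x := by
  have h1 : HasDerivAt (fun y : ℝ => -y ^ 2 / (4 * t)) (-(2 * x) / (4 * t)) x := by
    simpa using ((hasDerivAt_pow 2 x).neg.div_const (4 * t))
  have h2 := (h1.exp).const_mul (Real.sqrt (4 * Real.pi * t))⁻¹
  refine HasDerivAt.congr_deriv h2 ?_
  rw [heatK', heatK]
  have h4t : (4 : ℝ) * t ≠ 0 := by positivity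
  have h2t : (2 : ℝ) * t ≠ 0 := by positivity
  field_simp
  ring

/-- A continuous function with finite limits at `±∞` is bounded. -/
lemma memBc_bounded {F : ℝ → ℝ} (hc : Continuous F) (hbot : Tendsto F atBot (nhds (0 : ℝ)))
    {L : ℝ} (htop : Tendsto F atTop (nhds L)) : ∃ M : ℝ, ∀ x, ‖F x‖ ≤ M := by
  have h1 : ∀ᶠ x in atTop, ‖F x‖ ≤ ‖L‖ + 1 := by
    filter_upwards [htop (Metric.ball_mem_nhds L one_pos)] with x hx
    have hd : |F x - L| < 1 := by simpa [Real.dist_eq] using hx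
    have h := abs_sub_abs_le_abs_sub (F x) L
    rw [Real.norm_eq_abs, Real.norm_eq_abs]; linarith
  have h2 : ∀ᶠ x in atBot, ‖F x‖ ≤ 1 := by
    filter_upwards [hbot (Metric.ball_mem_nhds 0 one_pos)] with x hx
    have hd : |F x - 0| < 1 := by simpa [Real.dist_eq] using hx
    rw [Real.norm_eq_abs]; simpa using hd.le
  obtain ⟨B, hB⟩ := eventually_atTop.mp h1
  obtain ⟨A, hA⟩ := eventually_atBot.mp h2
  obtain ⟨C, hC⟩ := (isCompact_Icc (a := A) (b := B)).exists_bound_of_continuousOn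
    hc.continuousOn
  refine ⟨max (max (‖L‖ + 1) 1) C, fun x => ?_⟩
  by_cases hxA : x ≤ A
  · exact le_trans (hA x hxA) (le_trans (le_max_right _ _) (le_max_left _ _))
  by_cases hxB : B ≤ x
  · exact le_trans (hB x hxB) (le_trans (le_max_left _ _) (le_max_left _ _))
  · exact le_trans (hC x ⟨by linarith, by linarith⟩) (le_max_right _ _)

/-- Dominated convergence for the convolution of a bounded `F` with an integrable kernel. -/
lemma conv_tendsto {g F : ℝ → ℝ} (hg : Integrable g) (hgc : Continuous g)
    (hFc : Continuous F) {M : ℝ} (hM : ∀ x, ‖F x‖ ≤ M) {l : Filter ℝ}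
    [l.IsCountablyGenerated] {c : ℝ}
    (h : ∀ ξ : ℝ, Tendsto (fun x => F (x - ξ)) l (nhds c)) :
    Tendsto (fun x => ∫ ξ : ℝ, F (x - ξ) * g ξ) l (nhds (c * ∫ ξ : ℝ, g ξ)) := by
  rw [← integral_const_mul]
  apply tendsto_integral_filter_of_dominated_convergence (fun ξ => M * ‖g ξ‖)
  · exact Eventually.of_forall fun x =>
      (Continuous.aestronglyMeasurable (by fun_prop))
  · refine Eventually.of_forall fun x => Eventually.of_forall fun ξ => ?_
    rw [norm_mul]
    exact mul_le_mul_of_nonneg_right (hM _) (norm_nonneg _)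
  · exact hg.norm.const_mul M
  · exact Eventually.of_forall fun ξ => (h ξ).mul_const _

/-- `u(x,t) → 0` as `|x| → ∞`, and the improper integral of `u(·,t)` over `ℝ`
recovers the integral of the initial data: `lim_{α→−∞,β→+∞} ∫_α^β u = F(∞)`. -/
theorem stmt2 (F : ℝ → ℝ) (hF : memBc F) (t : ℝ) (ht : 0 < t) :
    Tendsto (fun x : ℝ => heatConv F t x) atTop (nhds 0) ∧
    Tendsto (fun x : ℝ => heatConv F t x) atBot (nhds 0) ∧
    (∀ L : ℝ, Tendsto F atTop (nhds L) →
      Tendsto (fun p : ℝ × ℝ => ∫ ξ in p.1..p.2, heatConv F t ξ)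
        (atBot ×ˢ atTop) (nhds L)) := by
  obtain ⟨hc, hbot, L0, htop0⟩ := hF
  obtain ⟨M, hM⟩ := memBc_bounded hc hbot htop0
  have hshift_top : ∀ {LL : ℝ}, Tendsto F atTop (nhds LL) →
      ∀ ξ : ℝ, Tendsto (fun x => F (x - ξ)) atTop (nhds LL) := by
    intro LL hLL ξ
    have h := hLL.comp (tendsto_atTop_add_const_right atTop (-ξ) tendsto_id)
    simpa [Function.comp_def, sub_eq_add_neg] using h
  have hshift_bot : ∀ ξ : ℝ, Tendsto (fun x => F (x - ξ)) atBot (nhds 0) := by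
    intro ξ
    have h := hbot.comp (tendsto_atBot_add_const_right atBot (-ξ) tendsto_id)
    simpa [Function.comp_def, sub_eq_add_neg] using h
  refine ⟨?_, ?_, ?_⟩
  · have h := conv_tendsto (integrable_heatK' ht) (heatK'_cont t) hc hM (hshift_top htop0)
    simpa [heatConv, integral_heatK' ht] using h
  · have h := conv_tendsto (integrable_heatK' ht) (heatK'_cont t) hc hM hshift_bot
    simpa [heatConv, integral_heatK' ht] using h
  · intro L hL
    set v : ℝ → ℝ := fun x => ∫ ξ : ℝ, F (x - ξ) * heatK t ξ with hv
    have hvtop : Tendsto v atTop (nhds L) := by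
      have h := conv_tendsto (integrable_heatK ht) (heatK_cont t) hc hM (hshift_top hL)
      simpa [hv, integral_heatK ht] using h
    have hvbot : Tendsto v atBot (nhds 0) := by
      have h := conv_tendsto (integrable_heatK ht) (heatK_cont t) hc hM hshift_bot
      simpa [hv, integral_heatK ht] using h
    -- the reflection identity
    have hrefl : ∀ (g : ℝ → ℝ) (x : ℝ),
        ∫ ξ : ℝ, F (x - ξ) * g ξ = ∫ η : ℝ, F η * g (x - η) := by
      intro g x
      rw [← integral_sub_left_eq_self (fun η => F η * g (x - η)) volume x]
      exact integral_congr_ae (Eventually.of_forall fun ξ => by simp)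
    have hconv : ∀ x : ℝ, heatConv F t x = ∫ η : ℝ, F η * heatK' t (x - η) := fun x => by
      rw [heatConv, hrefl]
    have hker' : ∀ x : ℝ, Integrable (fun η => F η * heatK' t (x - η)) := fun x =>
      ((integrable_heatK' ht).comp_sub_left x).bdd_mul hc.aestronglyMeasurable (Eventually.of_forall hM)
    have hkerK : ∀ x : ℝ, Integrable (fun η => F η * heatK t (x - η)) := fun x =>
      ((integrable_heatK ht).comp_sub_left x).bdd_mul hc.aestronglyMeasurable (Eventually.of_forall hM)
    have key : ∀ α β : ℝ, α ≤ β → ∫ x in α..β, heatConv F t x = v β - v α := by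
      intro α β hab
      have hmeas : AEStronglyMeasurable (fun p : ℝ × ℝ => F p.2 * heatK' t (p.1 - p.2))
          ((volume.restrict (Set.Ioc α β)).prod volume) :=
        Continuous.aestronglyMeasurable (by
          exact (hc.comp continuous_snd).mul
            ((heatK'_cont t).comp (continuous_fst.sub continuous_snd)))
      have hprod : Integrable (fun p : ℝ × ℝ => F p.2 * heatK' t (p.1 - p.2))
          ((volume.restrict (Set.Ioc α β)).prod volume) := by
        rw [integrable_prod_iff hmeas]
        constructor
        · exact Eventually.of_forall fun x => hker' x
        · refine Integrable.mono' (integrable_const (M * ∫ η : ℝ, ‖heatK' t η‖))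
            hmeas.norm.integral_prod_right' (Eventually.of_forall fun x => ?_)
          rw [Real.norm_eq_abs, abs_of_nonneg (integral_nonneg fun η => norm_nonneg _)]
          calc ∫ η : ℝ, ‖F η * heatK' t (x - η)‖
              ≤ ∫ η : ℝ, M * ‖heatK' t (x - η)‖ := by
                refine integral_mono (hker' x).norm
                  (((integrable_heatK' ht).comp_sub_left x).norm.const_mul M) fun η => ?_
                rw [norm_mul]
                exact mul_le_mul_of_nonneg_right (hM _) (norm_nonneg _)
            _ = M * ∫ η : ℝ, ‖heatK' t (x - η)‖ := integral_const_mul _ _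
            _ = M * ∫ η : ℝ, ‖heatK' t η‖ := by
                rw [integral_sub_left_eq_self (fun η => ‖heatK' t η‖) volume x]
      calc ∫ x in α..β, heatConv F t x
          = ∫ x in Set.Ioc α β, ∫ η : ℝ, F η * heatK' t (x - η) := by
            rw [intervalIntegral.integral_of_le hab]
            exact setIntegral_congr_ae measurableSet_Ioc
              (Eventually.of_forall fun x _ => hconv x)
        _ = ∫ η : ℝ, ∫ x in Set.Ioc α β, F η * heatK' t (x - η) :=
            integral_integral_swap hprod
        _ = ∫ η : ℝ, F η * (heatK t (β - η) - heatK t (α - η)) := by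
            refine integral_congr_ae (Eventually.of_forall fun η => ?_)
            show ∫ x in Set.Ioc α β, F η * heatK' t (x - η)
              = F η * (heatK t (β - η) - heatK t (α - η))
            have hftc : ∫ x in α..β, heatK' t (x - η)
                = heatK t (β - η) - heatK t (α - η) := by
              refine intervalIntegral.integral_eq_sub_of_hasDerivAt
                (f := fun y => heatK t (y - η)) (fun x _ => ?_) ?_
              · have h1 := (hasDerivAt_heatK ht (x - η)).comp x ((hasDerivAt_id x).sub_const η)
                exact h1.congr_deriv (mul_one _)
              · exact Continuous.intervalIntegrable
                  ((heatK'_cont t).comp (continuous_id.sub continuous_const)) α β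
            rw [integral_const_mul,
              show (∫ x in Set.Ioc α β, heatK' t (x - η)) = ∫ x in α..β, heatK' t (x - η)
                from (intervalIntegral.integral_of_le hab).symm, hftc]
        _ = v β - v α := by
            have h1 := hkerK β
            have h2 := hkerK α
            have e1 : v β = ∫ η : ℝ, F η * heatK t (β - η) := hrefl (heatK t) β
            have e2 : v α = ∫ η : ℝ, F η * heatK t (α - η) := hrefl (heatK t) α
            simp_rw [mul_sub]
            rw [integral_sub h1 h2, e1, e2]
    have hmain : Tendsto (fun p : ℝ × ℝ => v p.2 - v p.1) (atBot ×ˢ atTop) (nhds L) := by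
      have h := (hvtop.comp tendsto_snd).sub (hvbot.comp tendsto_fst)
      simpa using h
    have hev : ∀ᶠ p : ℝ × ℝ in atBot ×ˢ atTop, p.1 ≤ p.2 :=
      (Filter.Eventually.prod_mk (eventually_le_atBot (0 : ℝ))
        (eventually_ge_atTop (0 : ℝ))).mono fun p hp => le_trans hp.1 hp.2
    exact Tendsto.congr' (hev.mono fun p hp => (key p.1 p.2 hp).symm) hmain
end

section
/- Let F ∈ B_c, t > 0 and u(x,t) = ∫_ℝ F(x−ξ) Θ_t'(ξ) dξ. Then the Alexiewicz norm of u(·,t) satisfies sup_{x<y} |∫_x^y u(ξ,t) dξ| ≤ ‖F‖'_∞. Moreover this inequality is sharp: the supremum over all nonzero F ∈ B_c of (sup_{x<y} |∫_x^y u(ξ,t) dξ|) / ‖F‖'_∞ equals 1. -/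
open MeasureTheory Filter Topology

/-- `‖F‖'_∞ = sup_{x<y} |F(x) − F(y)|`. -/
noncomputable def normBc (F : ℝ → ℝ) : ℝ :=
  sSup {r : ℝ | ∃ x y : ℝ, x < y ∧ r = |F x - F y|}

/-- Alexiewicz norm of a (continuous) function: `sup_{x<y} |∫_x^y v|`. -/
noncomputable def alexNorm (v : ℝ → ℝ) : ℝ :=
  sSup {r : ℝ | ∃ x y : ℝ, x < y ∧ r = |∫ ξ in x..y, v ξ|}

lemma heatK_pos {t : ℝ} (ht : 0 < t) (x : ℝ) : 0 < heatK t x := by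
  have : 0 < Real.sqrt (4 * Real.pi * t) := Real.sqrt_pos.2 (by positivity)
  exact mul_pos (inv_pos.2 this) (Real.exp_pos _)

lemma heatK_eq (t : ℝ) (x : ℝ) :
    heatK t x = (Real.sqrt (4 * Real.pi * t))⁻¹ * Real.exp (-((4*t)⁻¹) * x ^ 2) := by
  unfold heatK; ring_nf

lemma memBc_bounded_s3 {F : ℝ → ℝ} (hF : memBc F) : ∃ M : ℝ, 0 ≤ M ∧ ∀ x, |F x| ≤ M := by
  obtain ⟨hc, hbot, L, htop⟩ := hF
  have h1 : ∀ᶠ x in atBot, |F x| ≤ 1 := by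
    have := hbot.eventually (eventually_abs_sub_lt 0 one_pos)
    filter_upwards [this] with x hx; simpa using le_of_lt hx
  have h2 : ∀ᶠ x in atTop, |F x| ≤ |L| + 1 := by
    have := htop.eventually (eventually_abs_sub_lt L one_pos)
    filter_upwards [this] with x hx
    calc |F x| = |L + (F x - L)| := by ring_nf
      _ ≤ |L| + |F x - L| := abs_add_le _ _
      _ ≤ |L| + 1 := by linarith [le_of_lt hx]
  obtain ⟨a, ha⟩ := eventually_atBot.mp h1
  obtain ⟨b, hb⟩ := eventually_atTop.mp h2
  obtain ⟨C, hC⟩ := (isCompact_Icc (a := a) (b := b)).exists_bound_of_continuousOn hc.continuousOn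
  refine ⟨max (max 1 (|L| + 1)) C, le_trans (le_trans (by norm_num) (le_max_left 1 (|L|+1))) (le_max_left _ _), fun x => ?_⟩
  by_cases hxa : x ≤ a
  · exact le_trans (ha x hxa) (le_trans (le_trans (le_max_left _ _) (le_max_left _ _)) le_rfl)
  · by_cases hxb : b ≤ x
    · exact le_trans (hb x hxb) (le_trans (le_max_right _ _) (le_max_left _ _))
    · have : x ∈ Set.Icc a b := ⟨le_of_not_ge hxa, le_of_not_ge hxb⟩
      exact le_trans (hC x this) (le_max_right _ _)


lemma heatConv_rev {F : ℝ → ℝ} (t η : ℝ) :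
    heatConv F t η = ∫ ζ : ℝ, F ζ * heatK' t (η - ζ) := by
  unfold heatConv
  rw [← integral_sub_left_eq_self (fun ξ => F (η - ξ) * heatK' t ξ) volume η]
  congr 1; funext ζ; rw [sub_sub_cancel]

lemma integral_heatConv_eq {F : ℝ → ℝ} (hF : memBc F) {t : ℝ} (ht : 0 < t)
    {x y : ℝ} (hxy : x ≤ y) :
    ∫ η in x..y, heatConv F t η = ∫ ξ : ℝ, (F (y - ξ) - F (x - ξ)) * heatK t ξ := by
  obtain ⟨M, hM0, hM⟩ := memBc_bounded_s3 hF
  have hc := hF.1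
  have hIk' := integrable_heatK' ht
  have hIk := integrable_heatK ht
  have hsec : ∀ η : ℝ, Integrable fun ζ => F ζ * heatK' t (η - ζ) := fun η =>
    (hIk'.comp_sub_left η).bdd_mul hc.aestronglyMeasurable (Eventually.of_forall fun ζ => by simpa using hM ζ)
  have hsecK : ∀ c : ℝ, Integrable fun ξ => F (c - ξ) * heatK t ξ := fun c =>
    hIk.bdd_mul (hc.comp (continuous_const.sub continuous_id)).aestronglyMeasurable
      (Eventually.of_forall fun ξ => by simpa using hM (c - ξ))
  set μ := volume.restrict (Set.Ioc x y) with hμ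
  have hPc : Continuous fun p : ℝ × ℝ => F p.2 * heatK' t (p.1 - p.2) :=
    (hc.comp continuous_snd).mul ((heatK'_cont t).comp (continuous_fst.sub continuous_snd))
  have hP : Integrable (fun p : ℝ × ℝ => F p.2 * heatK' t (p.1 - p.2)) (μ.prod volume) := by
    rw [integrable_prod_iff hPc.aestronglyMeasurable]
    constructor
    · exact Eventually.of_forall fun η => hsec η
    · set I := ∫ ζ : ℝ, ‖heatK' t ζ‖ with hI
      have hInn : ∀ η : ℝ, (∫ ζ : ℝ, ‖F ζ * heatK' t (η - ζ)‖) ≤ M * I := by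
        intro η
        have h1 : (∫ ζ : ℝ, ‖F ζ * heatK' t (η - ζ)‖) ≤ ∫ ζ : ℝ, M * ‖heatK' t (η - ζ)‖ := by
          refine integral_mono (hsec η).norm (((hIk'.comp_sub_left η).norm).const_mul M) ?_
          intro ζ
          show ‖F ζ * heatK' t (η - ζ)‖ ≤ M * ‖heatK' t (η - ζ)‖
          rw [norm_mul]
          exact mul_le_mul_of_nonneg_right (by simpa using hM ζ) (norm_nonneg _)
        have h2 : (∫ ζ : ℝ, M * ‖heatK' t (η - ζ)‖) = M * I := by
          rw [integral_const_mul]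
          congr 1
          exact integral_sub_left_eq_self (fun ζ => ‖heatK' t ζ‖) volume η
        linarith
      have hconst : Integrable (fun _ : ℝ => M * I) μ := by
        rw [hμ]
        exact (integrableOn_const_iff (C := M * I)).mpr (Or.inr measure_Ioc_lt_top)
      refine Integrable.mono' hconst
        ((hPc.norm.aestronglyMeasurable (μ := μ.prod volume)).integral_prod_right') ?_
      refine Eventually.of_forall fun η => ?_
      rw [Real.norm_eq_abs, abs_of_nonneg (integral_nonneg fun ζ => norm_nonneg _)]
      exact hInn η
  have hswap := integral_integral_swap (f := fun η ζ => F ζ * heatK' t (η - ζ)) hP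
  have hftc : ∀ ζ : ℝ, (∫ η in Set.Ioc x y, heatK' t (η - ζ)) =
      heatK t (y - ζ) - heatK t (x - ζ) := by
    intro ζ
    rw [← intervalIntegral.integral_of_le hxy]
    refine intervalIntegral.integral_eq_sub_of_hasDerivAt (f := fun η => heatK t (η - ζ))
      (f' := fun η => heatK' t (η - ζ)) (fun η _ => ?_) ?_
    · have h := (hasDerivAt_heatK ht (η - ζ)).comp η ((hasDerivAt_id η).sub_const ζ)
      exact h.congr_deriv (mul_one _)
    · exact ((heatK'_cont t).comp (continuous_id.sub continuous_const)).intervalIntegrable x y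
  have hsubst : ∀ c : ℝ, (∫ ζ : ℝ, F ζ * heatK t (c - ζ)) = ∫ ξ : ℝ, F (c - ξ) * heatK t ξ := by
    intro c
    rw [← integral_sub_left_eq_self (fun ξ => F (c - ξ) * heatK t ξ) volume c]
    congr 1; funext ζ; rw [sub_sub_cancel]
  calc ∫ η in x..y, heatConv F t η
      = ∫ η in Set.Ioc x y, heatConv F t η := intervalIntegral.integral_of_le hxy
    _ = ∫ η, (∫ ζ : ℝ, F ζ * heatK' t (η - ζ)) ∂μ := by
        rw [hμ]; exact integral_congr_ae (Eventually.of_forall fun η => heatConv_rev (F := F) t η)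
    _ = ∫ ζ : ℝ, ∫ η, F ζ * heatK' t (η - ζ) ∂μ := hswap
    _ = ∫ ζ : ℝ, F ζ * (heatK t (y - ζ) - heatK t (x - ζ)) := by
        congr 1; funext ζ
        rw [integral_const_mul, hμ, hftc ζ]
    _ = ∫ ξ : ℝ, (F (y - ξ) - F (x - ξ)) * heatK t ξ := by
        have h1 : (fun ζ : ℝ => F ζ * (heatK t (y - ζ) - heatK t (x - ζ)))
            = fun ζ : ℝ => F ζ * heatK t (y - ζ) - F ζ * heatK t (x - ζ) := by
          funext ζ; ring
        have h2 : (fun ξ : ℝ => (F (y - ξ) - F (x - ξ)) * heatK t ξ)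
            = fun ξ : ℝ => F (y - ξ) * heatK t ξ - F (x - ξ) * heatK t ξ := by
          funext ξ; ring
        have hy : Integrable fun ζ : ℝ => F ζ * heatK t (y - ζ) :=
          (hIk.comp_sub_left y).bdd_mul hc.aestronglyMeasurable
            (Eventually.of_forall fun ζ => by simpa using hM ζ)
        have hx : Integrable fun ζ : ℝ => F ζ * heatK t (x - ζ) :=
          (hIk.comp_sub_left x).bdd_mul hc.aestronglyMeasurable
            (Eventually.of_forall fun ζ => by simpa using hM ζ)
        rw [h1, h2, integral_sub hy hx, integral_sub (hsecK y) (hsecK x), hsubst, hsubst]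

lemma osc_bddAbove {F : ℝ → ℝ} (hF : memBc F) :
    BddAbove {r : ℝ | ∃ x y : ℝ, x < y ∧ r = |F x - F y|} := by
  obtain ⟨M, hM0, hM⟩ := memBc_bounded_s3 hF
  refine ⟨2 * M, fun r hr => ?_⟩
  obtain ⟨a, b, hab, rfl⟩ := hr
  calc |F a - F b| ≤ |F a| + |F b| := abs_sub _ _
    _ ≤ M + M := add_le_add (hM a) (hM b)
    _ = 2 * M := by ring

lemma osc_le_normBc {F : ℝ → ℝ} (hF : memBc F) {a b : ℝ} (hab : a < b) :
    |F a - F b| ≤ normBc F :=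
  le_csSup (osc_bddAbove hF) ⟨a, b, hab, rfl⟩

lemma normBc_nonneg {F : ℝ → ℝ} (hF : memBc F) : 0 ≤ normBc F :=
  le_trans (abs_nonneg _) (osc_le_normBc hF zero_lt_one)

lemma interval_bound {F : ℝ → ℝ} (hF : memBc F) {t : ℝ} (ht : 0 < t)
    {x y : ℝ} (hxy : x < y) :
    |∫ η in x..y, heatConv F t η| ≤ normBc F := by
  obtain ⟨M, hM0, hM⟩ := memBc_bounded_s3 hF
  have hc := hF.1
  have hIk := integrable_heatK ht
  have hsecK : ∀ c : ℝ, Integrable fun ξ => F (c - ξ) * heatK t ξ := fun c =>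
    hIk.bdd_mul (hc.comp (continuous_const.sub continuous_id)).aestronglyMeasurable
      (Eventually.of_forall fun ξ => by simpa using hM (c - ξ))
  have hint : Integrable fun ξ : ℝ => (F (y - ξ) - F (x - ξ)) * heatK t ξ := by
    have := (hsecK y).sub (hsecK x)
    refine this.congr ?_
    filter_upwards with ξ
    show F (y - ξ) * heatK t ξ - F (x - ξ) * heatK t ξ = _
    ring
  rw [integral_heatConv_eq hF ht hxy.le]
  calc |∫ ξ : ℝ, (F (y - ξ) - F (x - ξ)) * heatK t ξ|
      ≤ ∫ ξ : ℝ, ‖(F (y - ξ) - F (x - ξ)) * heatK t ξ‖ := by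
        rw [← Real.norm_eq_abs]; exact norm_integral_le_integral_norm _
    _ ≤ ∫ ξ : ℝ, normBc F * heatK t ξ := by
        refine integral_mono hint.norm (hIk.const_mul _) fun ξ => ?_
        show ‖(F (y - ξ) - F (x - ξ)) * heatK t ξ‖ ≤ normBc F * heatK t ξ
        rw [norm_mul, Real.norm_eq_abs, Real.norm_eq_abs,
          abs_of_pos (heatK_pos ht ξ)]
        refine mul_le_mul_of_nonneg_right ?_ (le_of_lt (heatK_pos ht ξ))
        rw [abs_sub_comm]
        exact osc_le_normBc hF (by linarith : x - ξ < y - ξ)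
    _ = normBc F := by rw [integral_const_mul, integral_heatK ht, mul_one]

lemma alexNorm_le_normBc {F : ℝ → ℝ} (hF : memBc F) {t : ℝ} (ht : 0 < t) :
    alexNorm (fun x => heatConv F t x) ≤ normBc F := by
  refine csSup_le ⟨|∫ ξ in (0:ℝ)..1, heatConv F t ξ|, 0, 1, one_pos, rfl⟩ ?_
  rintro r ⟨a, b, hab, rfl⟩
  exact interval_bound hF ht hab

noncomputable def logi (x : ℝ) : ℝ := Real.exp x / (Real.exp x + 1)

lemma logi_denom_pos (x : ℝ) : 0 < Real.exp x + 1 := by positivity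

lemma logi_nonneg (x : ℝ) : 0 ≤ logi x :=
  div_nonneg (Real.exp_pos x).le (logi_denom_pos x).le

lemma logi_le_one (x : ℝ) : logi x ≤ 1 := by
  rw [logi, div_le_one (logi_denom_pos x)]; linarith

lemma logi_eq (x : ℝ) : logi x = 1 - (Real.exp x + 1)⁻¹ := by
  rw [logi]; field_simp; ring

lemma logi_tendsto_atBot : Tendsto logi atBot (𝓝 0) := by
  have h1 : ContinuousAt (fun s : ℝ => s / (s + 1)) 0 :=
    continuousAt_id.div (continuousAt_id.add continuousAt_const) (by norm_num)
  have := h1.tendsto.comp Real.tendsto_exp_atBot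
  simp at this; exact this

lemma logi_tendsto_atTop : Tendsto logi atTop (𝓝 1) := by
  have h2 : Tendsto (fun x : ℝ => Real.exp x + 1) atTop atTop :=
    tendsto_atTop_add_const_right atTop 1 Real.tendsto_exp_atTop
  have h3 : Tendsto (fun x : ℝ => (Real.exp x + 1)⁻¹) atTop (𝓝 0) :=
    tendsto_inv_atTop_zero.comp h2
  have h4 := tendsto_const_nhds (α := ℝ) (x := (1:ℝ)) (f := atTop).sub h3
  simp only [sub_zero] at h4
  refine h4.congr fun x => ?_
  rw [logi_eq]

lemma memBc_logi : memBc logi := by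
  refine ⟨?_, logi_tendsto_atBot, 1, logi_tendsto_atTop⟩
  exact Real.continuous_exp.div (Real.continuous_exp.add continuous_const)
    fun x => (logi_denom_pos x).ne'

lemma logi_ne_zero : logi ≠ 0 := by
  intro h
  have := congrFun h 0
  simp only [logi, Real.exp_zero, Pi.zero_apply] at this
  norm_num at this

lemma logi_osc_le (a b : ℝ) : |logi a - logi b| ≤ 1 := by
  have h1 := logi_nonneg a; have h2 := logi_le_one a
  have h3 := logi_nonneg b; have h4 := logi_le_one b
  rw [abs_le]; constructor <;> linarith

lemma normBc_logi : normBc logi = 1 := by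
  have hub : ∀ r ∈ {r : ℝ | ∃ x y : ℝ, x < y ∧ r = |logi x - logi y|}, r ≤ 1 := by
    rintro r ⟨a, b, hab, rfl⟩; exact logi_osc_le a b
  refine le_antisymm (csSup_le ⟨|logi 0 - logi 1|, 0, 1, one_pos, rfl⟩ hub) ?_
  have h2 : Tendsto (fun n : ℕ => ((n : ℝ) + 1)) atTop atTop :=
    tendsto_atTop_add_const_right atTop 1 tendsto_natCast_atTop_atTop
  have h1 : Tendsto (fun n : ℕ => -((n : ℝ) + 1)) atTop atBot :=
    tendsto_neg_atTop_atBot.comp h2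
  have hseq : Tendsto (fun n : ℕ => |logi (-((n : ℝ) + 1)) - logi ((n : ℝ) + 1)|)
      atTop (𝓝 |(0 : ℝ) - 1|) :=
    ((logi_tendsto_atBot.comp h1).sub (logi_tendsto_atTop.comp h2)).abs
  have : |(0 : ℝ) - 1| = 1 := by norm_num
  rw [this] at hseq
  refine le_of_tendsto' hseq fun n => ?_
  refine le_csSup ⟨1, hub⟩ ?_
  have hn : (0:ℝ) ≤ (n:ℝ) := n.cast_nonneg
  exact ⟨-((n : ℝ) + 1), (n : ℝ) + 1, by linarith, rfl⟩

lemma alexNorm_logi {t : ℝ} (ht : 0 < t) : alexNorm (fun x => heatConv logi t x) = 1 := by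
  have hub : ∀ r ∈ {r : ℝ | ∃ x y : ℝ, x < y ∧
      r = |∫ ξ in x..y, (fun x => heatConv logi t x) ξ|}, r ≤ 1 := by
    rintro r ⟨a, b, hab, rfl⟩
    exact (interval_bound memBc_logi ht hab).trans_eq normBc_logi
  refine le_antisymm (csSup_le ⟨_, 0, 1, one_pos, rfl⟩ hub) ?_
  have hDCT : Tendsto (fun n : ℕ => ∫ ξ : ℝ,
      (logi ((n:ℝ) + 1 - ξ) - logi (-((n:ℝ) + 1) - ξ)) * heatK t ξ) atTop (𝓝 1) := by
    have hcl := memBc_logi.1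
    have key := tendsto_integral_of_dominated_convergence (bound := heatK t)
      (F := fun (n:ℕ) ξ => (logi ((n:ℝ) + 1 - ξ) - logi (-((n:ℝ) + 1) - ξ)) * heatK t ξ)
      (f := heatK t)
      (fun n => (((hcl.comp (continuous_const.sub continuous_id)).sub
        (hcl.comp (continuous_const.sub continuous_id))).mul (heatK_cont t)).aestronglyMeasurable)
      (integrable_heatK ht)
      (fun n => Eventually.of_forall fun ξ => ?_)
      (Eventually.of_forall fun ξ => ?_)
    · simpa [integral_heatK ht] using key
    · show ‖(logi ((n:ℝ) + 1 - ξ) - logi (-((n:ℝ) + 1) - ξ)) * heatK t ξ‖ ≤ heatK t ξ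
      rw [norm_mul, Real.norm_eq_abs, Real.norm_eq_abs, abs_of_pos (heatK_pos ht ξ)]
      calc |logi ((n:ℝ) + 1 - ξ) - logi (-((n:ℝ) + 1) - ξ)| * heatK t ξ
          ≤ 1 * heatK t ξ :=
            mul_le_mul_of_nonneg_right (logi_osc_le _ _) (heatK_pos ht ξ).le
        _ = heatK t ξ := one_mul _
    · have ha : Tendsto (fun n : ℕ => (n:ℝ) + 1 - ξ) atTop atTop :=
        (tendsto_atTop_add_const_right atTop (1 - ξ) tendsto_natCast_atTop_atTop).congr
          fun n => by ring
      have hb : Tendsto (fun n : ℕ => -((n:ℝ) + 1) - ξ) atTop atBot :=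
        (tendsto_neg_atTop_atBot.comp
          (tendsto_atTop_add_const_right atTop (1 + ξ) tendsto_natCast_atTop_atTop)).congr
          fun n => by simp only [Function.comp]; ring
      have := ((logi_tendsto_atTop.comp ha).sub (logi_tendsto_atBot.comp hb)).mul_const
        (heatK t ξ)
      simpa using this
  have hT : Tendsto (fun n : ℕ =>
      |∫ η in (-((n:ℝ)+1))..((n:ℝ)+1), heatConv logi t η|) atTop (𝓝 1) := by
    have h1 := hDCT.abs
    rw [abs_one] at h1
    refine h1.congr fun n => ?_
    congr 1
    rw [integral_heatConv_eq memBc_logi ht (by nlinarith [Nat.cast_nonneg (α := ℝ) n] :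
      -((n:ℝ)+1) ≤ (n:ℝ)+1)]
  refine le_of_tendsto' hT fun n => ?_
  refine le_csSup ⟨1, hub⟩ ?_
  have hn : (0:ℝ) ≤ (n:ℝ) := n.cast_nonneg
  exact ⟨-((n:ℝ)+1), (n:ℝ)+1, by linarith, rfl⟩

/-- The Alexiewicz norm of `u(·,t)` is at most `‖F‖'_∞`, and this is sharp: the supremum
over nonzero `F ∈ B_c` of the ratio of the two norms equals `1`. -/
theorem stmt3 (t : ℝ) (ht : 0 < t) :
    (∀ F : ℝ → ℝ, memBc F → alexNorm (fun x => heatConv F t x) ≤ normBc F) ∧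
    sSup {r : ℝ | ∃ F : ℝ → ℝ, memBc F ∧ F ≠ 0 ∧
      r = alexNorm (fun x => heatConv F t x) / normBc F} = 1 := by
  refine ⟨fun F hF => alexNorm_le_normBc hF ht, ?_⟩
  have h1mem : (1:ℝ) ∈ {r : ℝ | ∃ F : ℝ → ℝ, memBc F ∧ F ≠ 0 ∧
      r = alexNorm (fun x => heatConv F t x) / normBc F} :=
    ⟨logi, memBc_logi, logi_ne_zero, by rw [alexNorm_logi ht, normBc_logi]; norm_num⟩
  have hub : ∀ r ∈ {r : ℝ | ∃ F : ℝ → ℝ, memBc F ∧ F ≠ 0 ∧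
      r = alexNorm (fun x => heatConv F t x) / normBc F}, r ≤ 1 := by
    rintro r ⟨F, hF, hF0, rfl⟩
    rcases eq_or_lt_of_le (normBc_nonneg hF) with h | h
    · rw [← h, div_zero]; norm_num
    · exact (div_le_one h).mpr (alexNorm_le_normBc hF ht)
  exact le_antisymm (csSup_le ⟨1, h1mem⟩ hub) (le_csSup ⟨1, hub⟩ h1mem)
end
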